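/- For every integer n ≥ 2, the sum a_n = ∑_{j=1}^{n-1} (-1)^j / sin²(jπ/(2n)) + (-1)^n/2 is ≤ -1/2; in particular a_n < 0. -/

import Mathlib

open Finset

/-- Alternating sum of an (eventually) antitone sequence, bounded above. -/
lemma alt_sum_le_aux (f : ℕ → ℝ) (hf : ∀ i j, 1 ≤ i → i ≤ j → f j ≤ f i) :
    ∀ m : ℕ, (∑ j ∈ Finset.Icc 1 m, (-1 : ℝ) ^ j * f j) ≤ if Odd m then -f m else 0 := by
  intro m
  induction m with
  | zero => simp
  | succ m ih =>
    rw [Finset.sum_Icc_succ_top (by omega : 1 ≤ m + 1)]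
    rcases Nat.even_or_odd m with he | ho
    · rw [if_neg (Nat.not_odd_iff_even.mpr he)] at ih
      rw [if_pos he.add_one]
      have hpow : (-1 : ℝ) ^ (m + 1) = -1 := by
        rw [pow_succ, he.neg_one_pow]; ring
      rw [hpow]; linarith
    · rw [if_pos ho] at ih
      rw [if_neg (by simp [Nat.odd_add_one, Nat.not_even_iff_odd, ho])]
      have hpow : (-1 : ℝ) ^ (m + 1) = 1 := by
        rw [pow_succ, ho.neg_one_pow]; ring
      have hm1 : 1 ≤ m := by rcases ho with ⟨k, hk⟩; omega
      have := hf m (m + 1) hm1 (Nat.le_succ m)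
      rw [hpow]; linarith

/-- For every integer `n ≥ 2`, the sum
`a_n = ∑_{j=1}^{n-1} (-1)^j / sin²(jπ/(2n)) + (-1)^n/2` is `≤ -1/2`; in particular `a_n < 0`. -/
theorem even_case_boundary_sum_neg (n : ℕ) (hn : 2 ≤ n) :
    ((∑ j ∈ Finset.Icc 1 (n - 1), (-1 : ℝ) ^ j / (Real.sin (j * Real.pi / (2 * n))) ^ 2)
        + (-1 : ℝ) ^ n / 2) ≤ -(1 / 2) ∧
    ((∑ j ∈ Finset.Icc 1 (n - 1), (-1 : ℝ) ^ j / (Real.sin (j * Real.pi / (2 * n))) ^ 2)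
        + (-1 : ℝ) ^ n / 2) < 0 := by
  have hnpos : (0 : ℝ) < n := by positivity
  -- basic facts about the angle kπ/(2n) for 1 ≤ k ≤ n-1
  have hang : ∀ k : ℕ, 1 ≤ k → k ≤ n - 1 →
      0 < (k : ℝ) * Real.pi / (2 * n) ∧ (k : ℝ) * Real.pi / (2 * n) < Real.pi / 2 := by
    intro k hk1 hk2
    have hkn : (k : ℝ) < n := by
      have : k < n := by omega
      exact_mod_cast this
    constructor
    · have : (0 : ℝ) < k := by exact_mod_cast hk1
      positivity
    · rw [div_lt_div_iff₀ (by positivity) (by norm_num)]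
      nlinarith [Real.pi_pos]
  have hsin : ∀ k : ℕ, 1 ≤ k → k ≤ n - 1 → 0 < Real.sin ((k : ℝ) * Real.pi / (2 * n)) := by
    intro k hk1 hk2
    obtain ⟨h1, h2⟩ := hang k hk1 hk2
    exact Real.sin_pos_of_pos_of_lt_pi h1 (by linarith [Real.pi_pos])
  -- monotonicity of sin on our range
  have hsinmono : ∀ i j : ℕ, 1 ≤ i → i ≤ j → j ≤ n - 1 →
      Real.sin ((i : ℝ) * Real.pi / (2 * n)) ≤ Real.sin ((j : ℝ) * Real.pi / (2 * n)) := by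
    intro i j hi hij hj
    obtain ⟨hi1, hi2⟩ := hang i hi (le_trans hij hj)
    obtain ⟨hj1, hj2⟩ := hang j (le_trans hi hij) hj
    have hij' : (i : ℝ) * Real.pi / (2 * n) ≤ (j : ℝ) * Real.pi / (2 * n) := by
      have : (i : ℝ) ≤ j := by exact_mod_cast hij
      have hpi := Real.pi_pos
      gcongr
    exact Real.strictMonoOn_sin.monotoneOn
      ⟨by linarith, le_of_lt hi2⟩ ⟨by linarith, le_of_lt hj2⟩ hij'
  -- the auxiliary antitone function
  set F : ℕ → ℝ := fun j => 1 / (Real.sin ((min j (n - 1) : ℕ) * Real.pi / (2 * n))) ^ 2 with hF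
  have hFanti : ∀ i j, 1 ≤ i → i ≤ j → F j ≤ F i := by
    intro i j hi hij
    have ha1 : 1 ≤ min i (n - 1) := le_min hi (by omega)
    have hab : min i (n - 1) ≤ min j (n - 1) := by omega
    have hb : min j (n - 1) ≤ n - 1 := min_le_right _ _
    have hsa := hsin (min i (n - 1)) ha1 (le_trans hab hb)
    have hsb := hsin (min j (n - 1)) (le_trans ha1 hab) hb
    have hmono := hsinmono (min i (n - 1)) (min j (n - 1)) ha1 hab hb
    simp only [hF]
    apply one_div_le_one_div_of_le (by positivity)
    nlinarith
  have key := alt_sum_le_aux F hFanti (n - 1)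
  -- rewrite the original sum using F
  have hsum : (∑ j ∈ Finset.Icc 1 (n - 1), (-1 : ℝ) ^ j / (Real.sin (j * Real.pi / (2 * n))) ^ 2)
      = ∑ j ∈ Finset.Icc 1 (n - 1), (-1 : ℝ) ^ j * F j := by
    apply Finset.sum_congr rfl
    intro j hj
    rw [Finset.mem_Icc] at hj
    have : min j (n - 1) = j := min_eq_left hj.2
    simp only [hF, this]
    ring
  rw [hsum]
  have hFlast : 1 ≤ F (n - 1) := by
    have h1 : min (n - 1) (n - 1) = n - 1 := min_self _
    have hs := hsin (n - 1) (by omega) le_rfl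
    have hs1 : Real.sin ((n - 1 : ℕ) * Real.pi / (2 * n)) ≤ 1 := Real.sin_le_one _
    simp only [hF, h1]
    rw [le_div_iff₀ (by positivity)]
    nlinarith
  have hmain : (∑ j ∈ Finset.Icc 1 (n - 1), (-1 : ℝ) ^ j * F j) + (-1 : ℝ) ^ n / 2 ≤ -(1 / 2) := by
    rcases Nat.even_or_odd n with he | ho
    · -- n even : n - 1 odd, sum ≤ -F(n-1) ≤ -1
      have hodd : Odd (n - 1) := by
        rcases he with ⟨k, hk⟩; exact ⟨k - 1, by omega⟩
      rw [if_pos hodd] at key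
      have hpow : (-1 : ℝ) ^ n = 1 := he.neg_one_pow
      rw [hpow]; linarith
    · -- n odd : n - 1 even, sum ≤ 0
      have heven : ¬ Odd (n - 1) := by
        rcases ho with ⟨k, hk⟩
        rw [← Nat.not_even_iff_odd]
        simp only [not_not]
        exact ⟨k, by omega⟩
      rw [if_neg heven] at key
      have hpow : (-1 : ℝ) ^ n = -1 := ho.neg_one_pow
      rw [hpow]; linarith
  exact ⟨hmain, by linarith⟩
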